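/- Let H be a v × b binary matrix with no 2×2 all-ones submatrix, every row of weight at least 2, every column of weight at least 2, and rank(H·Hᵀ) = 1 over F_2. Then every pair of distinct rows of H shares exactly one common 1-position; i.e., H is the incidence matrix of a pairwise balanced design of index one (with all blocks of size ≥ 2 and all replication numbers odd and ≥ 2). -/

import Mathlib

open Matrix

/-- A `v × b` binary matrix with no `2 × 2` all-ones submatrix,
all row and column weights at least 2, and `rank (H·Hᵀ) = 1` over `F_2` is the
incidence matrix of a pairwise balanced design of index one: every pair of
distinct rows shares exactly one common 1-position, all blocks (columns) have
size ≥ 2, and all replication numbers (row weights) are odd and ≥ 2. -/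
theorem stmt16 (v b : ℕ) (H : Matrix (Fin v) (Fin b) (ZMod 2))
    (h4 : ¬ ∃ (i₁ i₂ : Fin v) (j₁ j₂ : Fin b), i₁ ≠ i₂ ∧ j₁ ≠ j₂ ∧
      H i₁ j₁ = 1 ∧ H i₁ j₂ = 1 ∧ H i₂ j₁ = 1 ∧ H i₂ j₂ = 1)
    (hrow : ∀ i : Fin v, 2 ≤ (Finset.univ.filter (fun j : Fin b => H i j = 1)).card)
    (hcol : ∀ j : Fin b, 2 ≤ (Finset.univ.filter (fun i : Fin v => H i j = 1)).card)
    (hrank : (H * Hᵀ).rank = 1) :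
    (∀ i i' : Fin v, i ≠ i' →
      (Finset.univ.filter (fun j : Fin b => H i j = 1 ∧ H i' j = 1)).card = 1) ∧
    (∀ i : Fin v, Odd (Finset.univ.filter (fun j : Fin b => H i j = 1)).card) := by
  classical
  set M := H * Hᵀ with hM
  have hz : ∀ x : ZMod 2, x = 0 ∨ x = 1 := by decide
  have hMsymm : ∀ i i', M i i' = M i' i := by
    intro i i'
    have hT : Mᵀ = M := by
      rw [hM, Matrix.transpose_mul, Matrix.transpose_transpose]
    calc M i i' = Mᵀ i' i := rfl
    _ = M i' i := by rw [hT]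
  -- entry formula
  have hentry : ∀ i i' : Fin v, M i i' =
      ((Finset.univ.filter (fun j : Fin b => H i j = 1 ∧ H i' j = 1)).card : ZMod 2) := by
    intro i i'
    have h1 : M i i' = ∑ j, H i j * H i' j := by
      simp [hM, Matrix.mul_apply, Matrix.transpose_apply]
    rw [h1, Finset.card_filter]
    push_cast
    apply Finset.sum_congr rfl
    intro j _
    rcases hz (H i j) with h1 | h1 <;> rcases hz (H i' j) with h2 | h2 <;>
      simp [h1, h2]
  -- at most one common 1-position for distinct rows
  have hbound : ∀ i i' : Fin v, i ≠ i' →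
      (Finset.univ.filter (fun j : Fin b => H i j = 1 ∧ H i' j = 1)).card ≤ 1 := by
    intro i i' hne
    by_contra h
    push_neg at h
    obtain ⟨j₁, hj₁, j₂, hj₂, hjj⟩ := Finset.one_lt_card.mp h
    simp only [Finset.mem_filter] at hj₁ hj₂
    exact h4 ⟨i, i', j₁, j₂, hne, hjj, hj₁.2.1, hj₂.2.1, hj₁.2.2, hj₂.2.2⟩
  -- every row of M contains a nonzero entry
  have hrow1 : ∀ i : Fin v, ∃ i', M i i' ≠ 0 := by
    intro i
    obtain ⟨j, hj⟩ : ∃ j, H i j = 1 := by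
      have hne : (Finset.univ.filter (fun j : Fin b => H i j = 1)).Nonempty :=
        Finset.card_pos.mp (by have := hrow i; omega)
      obtain ⟨j, hj⟩ := hne
      exact ⟨j, (Finset.mem_filter.mp hj).2⟩
    obtain ⟨i', hi'mem, hi'ne⟩ :=
      Finset.exists_mem_ne (s := Finset.univ.filter (fun i : Fin v => H i j = 1))
        (by have := hcol j; omega) i
    have hi' : H i' j = 1 := (Finset.mem_filter.mp hi'mem).2
    have hne : i ≠ i' := fun h => hi'ne (h ▸ rfl)
    have hcard : (Finset.univ.filter (fun j : Fin b => H i j = 1 ∧ H i' j = 1)).card = 1 := by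
      have hle := hbound i i' hne
      have hpos : 0 < (Finset.univ.filter (fun j : Fin b => H i j = 1 ∧ H i' j = 1)).card :=
        Finset.card_pos.mpr ⟨j, by simp [hj, hi']⟩
      omega
    refine ⟨i', ?_⟩
    rw [hentry i i', hcard]
    exact one_ne_zero
  -- rank-1 structure: all entries of M equal 1
  have hfin : Module.finrank (ZMod 2) ↥(LinearMap.range M.mulVecLin) = 1 := hrank
  obtain ⟨v0, hv0ne, hv0span⟩ := finrank_eq_one_iff'.mp hfin
  have hcolmem : ∀ i' : Fin v, (fun i => M i i') ∈ LinearMap.range M.mulVecLin := by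
    intro i'
    refine ⟨Pi.single i' 1, ?_⟩
    ext i
    simp [Matrix.mulVecLin_apply, Matrix.mulVec_single]
  have hcols : ∀ i', (fun i => M i i') = 0 ∨
      (fun i => M i i') = (v0 : Fin v → ZMod 2) := by
    intro i'
    obtain ⟨c, hc⟩ := hv0span ⟨_, hcolmem i'⟩
    have hc' : c • (v0 : Fin v → ZMod 2) = fun i => M i i' := congrArg Subtype.val hc
    rcases hz c with h | h
    · left; rw [← hc', h, zero_smul]
    · right; rw [← hc', h, one_smul]
  have hcolsv0 : ∀ i', (fun i => M i i') = (v0 : Fin v → ZMod 2) := by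
    intro i'
    rcases hcols i' with h | h
    · exfalso
      obtain ⟨i'', hi''⟩ := hrow1 i'
      have : M i'' i' = 0 := congrFun h i''
      exact hi'' (by rw [hMsymm i' i'', this])
    · exact h
  have hMv0 : ∀ i i', M i i' = (v0 : Fin v → ZMod 2) i := fun i i' =>
    congrFun (hcolsv0 i') i
  have hv0const : ∀ i i', (v0 : Fin v → ZMod 2) i = (v0 : Fin v → ZMod 2) i' := by
    intro i i'
    rw [← hMv0 i i', hMsymm i i', hMv0 i' i]
  have hall1 : ∀ i i', M i i' = 1 := by
    have hex : ∃ i, (v0 : Fin v → ZMod 2) i ≠ 0 := by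
      by_contra h
      push_neg at h
      exact hv0ne (Subtype.ext (funext fun i => h i))
    obtain ⟨i0, hi0⟩ := hex
    have hi01 : (v0 : Fin v → ZMod 2) i0 = 1 := by
      rcases hz ((v0 : Fin v → ZMod 2) i0) with h | h
      · exact absurd h hi0
      · exact h
    intro i i'
    rw [hMv0 i i', hv0const i i0, hi01]
  have castone : ∀ n : ℕ, (n : ZMod 2) = 1 → n % 2 = 1 := by
    intro n hn
    rcases Nat.mod_two_eq_zero_or_one n with h | h
    · exfalso
      have h2 : ((n % 2 : ℕ) : ZMod 2) = (n : ZMod 2) := ZMod.natCast_mod n 2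
      rw [h, hn] at h2
      simp at h2
    · exact h
  constructor
  · intro i i' hne
    have h1 := hentry i i'
    rw [hall1 i i'] at h1
    have hle := hbound i i' hne
    have := castone _ h1.symm
    omega
  · intro i
    have h1 := hentry i i
    rw [hall1 i i] at h1
    have heq : (Finset.univ.filter (fun j : Fin b => H i j = 1 ∧ H i j = 1)) =
        (Finset.univ.filter (fun j : Fin b => H i j = 1)) := by
      apply Finset.filter_congr
      intro j _
      simp [and_self]
    rw [heq] at h1
    rw [Nat.odd_iff]
    exact castone _ h1.symm
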